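/- Let A and B be real symmetric positive definite d×d matrices, suppose A has d pairwise distinct eigenvalues, and let v₁, …, v_d be a corresponding orthonormal basis of eigenvectors of A. Then M(A, B) = Σ_{i=1}^d √( (v_iᵀ B v_i) · (v_iᵀ B⁻¹ v_i) ) − d. -/

import Mathlib

open Matrix

/-- Eigenspace of a `d × d` real matrix `A` for the (potential) eigenvalue `μ`. -/
noncomputable def eigSp {d : ℕ} (A : Matrix (Fin d) (Fin d) ℝ) (μ : ℝ) :
    Submodule ℝ (Fin d → ℝ) :=
  Module.End.eigenspace A.mulVecLin μ

/-- `A` is aligned with `B` if every eigenspace of `B` is contained in an eigenspace of `A`. -/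
def IsAligned {d : ℕ} (A B : Matrix (Fin d) (Fin d) ℝ) : Prop :=
  ∀ μ : ℝ, ∃ ν : ℝ, eigSp B μ ≤ eigSp A ν

/-- The misalignment `M(A, B)`: the infimum, over symmetric positive definite matrices `S`
aligned with `A`, of `(1/2) · tr(S⁻¹ B + B⁻¹ S) − d`. -/
noncomputable def misalignment {d : ℕ} (A B : Matrix (Fin d) (Fin d) ℝ) : ℝ :=
  sInf {m : ℝ | ∃ S : Matrix (Fin d) (Fin d) ℝ,
    S.PosDef ∧ IsAligned S A ∧ m = (1 / 2) * (S⁻¹ * B + B⁻¹ * S).trace - d}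

section Aux

variable {d : ℕ} {v : Fin d → (Fin d → ℝ)}

/-- AM–GM. -/
lemma aux_amgm {b c s : ℝ} (hb : 0 < b) (hc : 0 < c) (hs : 0 < s) :
    Real.sqrt (b * c) ≤ (1 / 2) * (s⁻¹ * b + s * c) := by
  have h1 : Real.sqrt (s⁻¹ * b) * Real.sqrt (s * c) = Real.sqrt (b * c) := by
    rw [← Real.sqrt_mul (by positivity)]
    congr 1
    field_simp
  nlinarith [sq_nonneg (Real.sqrt (s⁻¹ * b) - Real.sqrt (s * c)),
    Real.sq_sqrt (show (0:ℝ) ≤ s⁻¹ * b by positivity),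
    Real.sq_sqrt (show (0:ℝ) ≤ s * c by positivity)]

lemma aux_at_opt {b c : ℝ} (hb : 0 < b) (hc : 0 < c) :
    (1 / 2) * ((Real.sqrt b / Real.sqrt c)⁻¹ * b + (Real.sqrt b / Real.sqrt c) * c)
      = Real.sqrt (b * c) := by
  have h1 : 0 < Real.sqrt b := Real.sqrt_pos.mpr hb
  have h2 : 0 < Real.sqrt c := Real.sqrt_pos.mpr hc
  rw [Real.sqrt_mul hb.le]
  field_simp
  nlinarith [Real.sq_sqrt hb.le, Real.sq_sqrt hc.le]

variable (hon : ∀ i j, v i ⬝ᵥ v j = if i = j then (1 : ℝ) else 0)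
include hon

lemma aux_vvt : (Matrix.of fun i j => v j i) * (Matrix.of fun i j => v j i)ᵀ = 1 := by
  rw [mul_eq_one_comm]
  ext i j
  simp only [Matrix.mul_apply, Matrix.transpose_apply, Matrix.of_apply, Matrix.one_apply]
  simpa [dotProduct] using hon i j

lemma aux_expand (x : Fin d → ℝ) (j : Fin d) :
    x j = ∑ i, (v i ⬝ᵥ x) * v i j := by
  have h := congrFun (congrArg (fun M => M *ᵥ x) (aux_vvt hon)) j
  simp only [Matrix.one_mulVec] at h
  rw [← h]
  simp only [Matrix.mulVec, Matrix.mul_apply, dotProduct, Matrix.transpose_apply,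
    Matrix.of_apply, Finset.sum_mul]
  rw [Finset.sum_comm]
  exact Finset.sum_congr rfl fun i _ => Finset.sum_congr rfl fun k _ => by ring

lemma aux_trace (M : Matrix (Fin d) (Fin d) ℝ) :
    M.trace = ∑ i, v i ⬝ᵥ M *ᵥ v i := by
  set V : Matrix (Fin d) (Fin d) ℝ := Matrix.of fun i j => v j i with hV
  have h : M.trace = (Vᵀ * M * V).trace := by
    rw [Matrix.trace_mul_comm, ← Matrix.mul_assoc, hV, aux_vvt hon, Matrix.one_mul]
  rw [h, Matrix.trace]
  refine Finset.sum_congr rfl fun i _ => ?_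
  simp only [Matrix.diag_apply, Matrix.mul_apply, Matrix.transpose_apply, Matrix.of_apply, hV,
    dotProduct, Matrix.mulVec, Finset.sum_mul, Finset.mul_sum]
  rw [Finset.sum_comm]
  exact Finset.sum_congr rfl fun j _ => Finset.sum_congr rfl fun k _ => by ring

end Aux

section Aux2

variable {d : ℕ} {v : Fin d → (Fin d → ℝ)}
variable (hon : ∀ i j, v i ⬝ᵥ v j = if i = j then (1 : ℝ) else 0)
include hon

lemma aux_vi_ne (i : Fin d) : v i ≠ 0 := by
  intro h
  have := hon i i
  simp [h, dotProduct] at this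

lemma aux_s_pos {S : Matrix (Fin d) (Fin d) ℝ} (hS : S.PosDef) {s : Fin d → ℝ}
    (hSv : ∀ i, S *ᵥ v i = s i • v i) (i : Fin d) : 0 < s i := by
  have hv := (Matrix.posDef_iff_dotProduct_mulVec.mp hS).2 (aux_vi_ne hon i)
  rw [show star (v i) = v i from funext fun j => star_trivial _, hSv i] at hv
  simpa [dotProduct_smul, hon i i] using hv

lemma aux_obj (B : Matrix (Fin d) (Fin d) ℝ) {S : Matrix (Fin d) (Fin d) ℝ}
    (hS : S.PosDef) {s : Fin d → ℝ} (hSv : ∀ i, S *ᵥ v i = s i • v i) :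
    (1 / 2) * (S⁻¹ * B + B⁻¹ * S).trace
      = ∑ i, (1 / 2) * ((s i)⁻¹ * (v i ⬝ᵥ B *ᵥ v i) + s i * (v i ⬝ᵥ B⁻¹ *ᵥ v i)) := by
  have hdet : IsUnit S.det := isUnit_iff_ne_zero.mpr hS.det_pos.ne'
  have hSsym : Sᵀ = S := by
    rw [← Matrix.conjTranspose_eq_transpose_of_trivial]; exact hS.1
  have hinvsym : (S⁻¹)ᵀ = S⁻¹ := by rw [Matrix.transpose_nonsing_inv, hSsym]
  have hinv : ∀ i, S⁻¹ *ᵥ v i = (s i)⁻¹ • v i := by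
    intro i
    have h0 : 0 < s i := aux_s_pos hon hS hSv i
    have h1 : S⁻¹ *ᵥ (S *ᵥ v i) = v i := by
      rw [Matrix.mulVec_mulVec, Matrix.nonsing_inv_mul _ hdet, Matrix.one_mulVec]
    rw [hSv i, Matrix.mulVec_smul] at h1
    calc S⁻¹ *ᵥ v i = (s i)⁻¹ • (s i • (S⁻¹ *ᵥ v i)) := by
          rw [smul_smul, inv_mul_cancel₀ h0.ne', one_smul]
      _ = (s i)⁻¹ • v i := by rw [h1]
  have hterm1 : ∀ i, v i ⬝ᵥ (S⁻¹ * B) *ᵥ v i = (s i)⁻¹ * (v i ⬝ᵥ B *ᵥ v i) := by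
    intro i
    rw [← Matrix.mulVec_mulVec, Matrix.dotProduct_mulVec, ← Matrix.mulVec_transpose,
      hinvsym, hinv i]
    simp [smul_dotProduct]
  have hterm2 : ∀ i, v i ⬝ᵥ (B⁻¹ * S) *ᵥ v i = s i * (v i ⬝ᵥ B⁻¹ *ᵥ v i) := by
    intro i
    rw [← Matrix.mulVec_mulVec, hSv i, Matrix.mulVec_smul]
    simp [dotProduct_smul]
  rw [Matrix.trace_add, aux_trace hon (S⁻¹ * B), aux_trace hon (B⁻¹ * S),
    ← Finset.sum_add_distrib, Finset.mul_sum]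
  exact Finset.sum_congr rfl fun i _ => by rw [hterm1 i, hterm2 i]

end Aux2

section Aux3

variable {d : ℕ} {v : Fin d → (Fin d → ℝ)}

/-- The matrix `∑ i, s i • v i v iᵀ`. -/
noncomputable def diagS (v : Fin d → (Fin d → ℝ)) (s : Fin d → ℝ) :
    Matrix (Fin d) (Fin d) ℝ :=
  Matrix.of fun j k => ∑ i, s i * v i j * v i k

lemma diagS_mulVec (s : Fin d → ℝ) (x : Fin d → ℝ) :
    (diagS v s) *ᵥ x = fun j => ∑ i, s i * (v i ⬝ᵥ x) * v i j := by
  funext j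
  simp only [diagS, Matrix.mulVec, dotProduct, Matrix.of_apply, Finset.sum_mul]
  rw [Finset.sum_comm]
  refine Finset.sum_congr rfl fun i _ => ?_
  simp only [Finset.mul_sum, Finset.sum_mul]
  exact Finset.sum_congr rfl fun k _ => by ring

variable (hon : ∀ i j, v i ⬝ᵥ v j = if i = j then (1 : ℝ) else 0)
include hon

lemma diagS_mulVec_v (s : Fin d → ℝ) (i : Fin d) :
    (diagS v s) *ᵥ v i = s i • v i := by
  rw [diagS_mulVec]
  funext j
  simp [hon, mul_ite, ite_mul, Finset.sum_ite_eq']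

lemma diagS_posdef {s : Fin d → ℝ} (hs : ∀ i, 0 < s i) : (diagS v s).PosDef := by
  refine Matrix.posDef_iff_dotProduct_mulVec.mpr ⟨?_, ?_⟩
  · rw [Matrix.IsHermitian, Matrix.conjTranspose_eq_transpose_of_trivial]
    ext j k
    simp only [Matrix.transpose_apply, diagS, Matrix.of_apply]
    exact Finset.sum_congr rfl fun i _ => by ring
  · intro x hx
    rw [show star x = x from funext fun j => star_trivial _, diagS_mulVec]
    have hsum : (x ⬝ᵥ fun j => ∑ i, s i * (v i ⬝ᵥ x) * v i j)
        = ∑ i, s i * (v i ⬝ᵥ x) ^ 2 := by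
      simp only [dotProduct, Finset.mul_sum]
      rw [Finset.sum_comm]
      refine Finset.sum_congr rfl fun i _ => ?_
      simp only [Finset.mul_sum, Finset.sum_mul, pow_two]
      exact Finset.sum_congr rfl fun k _ => Finset.sum_congr rfl fun l _ => by ring
    rw [hsum]
    obtain ⟨i0, hi0⟩ : ∃ i, v i ⬝ᵥ x ≠ 0 := by
      by_contra h
      push_neg at h
      exact hx (funext fun j => by rw [aux_expand hon x j]; simp [h])
    refine Finset.sum_pos' (fun i _ => mul_nonneg (hs i).le (sq_nonneg _))
      ⟨i0, Finset.mem_univ _, mul_pos (hs i0)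
        (lt_of_le_of_ne (sq_nonneg _) (Ne.symm (pow_ne_zero 2 hi0)))⟩

omit hon in
lemma aux_coef {A : Matrix (Fin d) (Fin d) ℝ} (hAsym : Aᵀ = A) {μ : Fin d → ℝ}
    (hev : ∀ i, A *ᵥ v i = μ i • v i) {μ' : ℝ} {x : Fin d → ℝ}
    (hx : A *ᵥ x = μ' • x) {j : Fin d} (hne : μ j ≠ μ') : v j ⬝ᵥ x = 0 := by
  have h1 : v j ⬝ᵥ (A *ᵥ x) = μ j * (v j ⬝ᵥ x) := by
    rw [Matrix.dotProduct_mulVec, ← Matrix.mulVec_transpose, hAsym, hev j]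
    simp [smul_dotProduct]
  rw [hx, dotProduct_smul, smul_eq_mul] at h1
  by_contra h0
  exact hne (mul_right_cancel₀ h0 h1).symm

lemma diagS_aligned {A : Matrix (Fin d) (Fin d) ℝ} (hAsym : Aᵀ = A) {μ : Fin d → ℝ}
    (hμ : Function.Injective μ) (hev : ∀ i, A *ᵥ v i = μ i • v i) (s : Fin d → ℝ) :
    IsAligned (diagS v s) A := by
  intro μ'
  by_cases hex : ∃ i, μ i = μ'
  · obtain ⟨i0, hi0⟩ := hex
    refine ⟨s i0, fun x hx => ?_⟩
    simp only [eigSp, Module.End.mem_eigenspace_iff, Matrix.mulVecLin_apply] at hx ⊢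
    have hcoef : ∀ j, j ≠ i0 → v j ⬝ᵥ x = 0 := fun j hj =>
      aux_coef hAsym hev hx (fun h => hj (hμ (h.trans hi0.symm)))
    rw [diagS_mulVec]
    funext j
    have hxj : x j = (v i0 ⬝ᵥ x) * v i0 j := by
      rw [aux_expand hon x j,
        Finset.sum_eq_single i0 (fun b _ hb => by rw [hcoef b hb]; ring) (by simp)]
    rw [Finset.sum_eq_single i0 (fun b _ hb => by rw [hcoef b hb]; ring) (by simp)]
    simp only [Pi.smul_apply, smul_eq_mul, hxj]
    ring
  · push_neg at hex
    refine ⟨0, fun x hx => ?_⟩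
    simp only [eigSp, Module.End.mem_eigenspace_iff, Matrix.mulVecLin_apply] at hx ⊢
    have hx0 : x = 0 := by
      funext j
      rw [aux_expand hon x j]
      simp only [Pi.zero_apply]
      exact Finset.sum_eq_zero fun i _ => by
        rw [aux_coef hAsym hev hx (hex i)]; ring
    rw [hx0]
    simp

end Aux3

/-- If `A` is positive definite with `d` pairwise distinct eigenvalues and
`v 0, …, v (d-1)` is a corresponding orthonormal basis of eigenvectors of `A`, then
`M(A, B) = ∑ i, √((vᵢᵀ B vᵢ) · (vᵢᵀ B⁻¹ vᵢ)) − d` for every positive definite `B`. -/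
theorem misalignment_eq_sum_sqrt_of_distinct_eigenvalues {d : ℕ}
    (A B : Matrix (Fin d) (Fin d) ℝ) (hA : A.PosDef) (hB : B.PosDef)
    (μ : Fin d → ℝ) (hμ : Function.Injective μ)
    (v : Fin d → (Fin d → ℝ))
    (hon : ∀ i j, v i ⬝ᵥ v j = if i = j then (1 : ℝ) else 0)
    (hev : ∀ i, A.mulVec (v i) = μ i • v i) :
    misalignment A B
      = (∑ i, Real.sqrt ((v i ⬝ᵥ B.mulVec (v i)) * (v i ⬝ᵥ B⁻¹.mulVec (v i)))) - d := by
  set b : Fin d → ℝ := fun i => v i ⬝ᵥ B *ᵥ v i with hbdef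
  set c : Fin d → ℝ := fun i => v i ⬝ᵥ B⁻¹ *ᵥ v i with hcdef
  have hb : ∀ i, 0 < b i := fun i => by
    have h := (Matrix.posDef_iff_dotProduct_mulVec.mp hB).2 (aux_vi_ne hon i)
    rwa [show star (v i) = v i from funext fun j => star_trivial _] at h
  have hc : ∀ i, 0 < c i := fun i => by
    have h := (Matrix.posDef_iff_dotProduct_mulVec.mp hB.inv).2 (aux_vi_ne hon i)
    rwa [show star (v i) = v i from funext fun j => star_trivial _] at h
  have hAsym : Aᵀ = A := by
    rw [← Matrix.conjTranspose_eq_transpose_of_trivial]; exact hA.1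
  set s : Fin d → ℝ := fun i => Real.sqrt (b i) / Real.sqrt (c i) with hsdef
  have hs : ∀ i, 0 < s i := fun i =>
    div_pos (Real.sqrt_pos.mpr (hb i)) (Real.sqrt_pos.mpr (hc i))
  set mstar : ℝ := (∑ i, Real.sqrt (b i * c i)) - d with hmstar
  set Ω : Set ℝ := {m : ℝ | ∃ S : Matrix (Fin d) (Fin d) ℝ,
    S.PosDef ∧ IsAligned S A ∧ m = (1 / 2) * (S⁻¹ * B + B⁻¹ * S).trace - d} with hΩ
  have hmem : mstar ∈ Ω := by
    refine ⟨diagS v s, diagS_posdef hon hs, diagS_aligned hon hAsym hμ hev s, ?_⟩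
    rw [aux_obj hon B (diagS_posdef hon hs) (diagS_mulVec_v hon s), hmstar]
    congr 1
    exact Finset.sum_congr rfl fun i _ => (aux_at_opt (hb i) (hc i)).symm
  have hlb : ∀ m ∈ Ω, mstar ≤ m := by
    rintro m ⟨S, hSpos, hal, rfl⟩
    have hchoice : ∀ i, ∃ ν : ℝ, S *ᵥ v i = ν • v i := by
      intro i
      obtain ⟨ν, hν⟩ := hal (μ i)
      refine ⟨ν, ?_⟩
      have hv : v i ∈ eigSp A (μ i) := by
        simp only [eigSp, Module.End.mem_eigenspace_iff, Matrix.mulVecLin_apply]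
        exact hev i
      have h := hν hv
      simpa only [eigSp, Module.End.mem_eigenspace_iff, Matrix.mulVecLin_apply] using h
    choose σ hσ using hchoice
    rw [aux_obj hon B hSpos hσ, hmstar]
    exact sub_le_sub_right (Finset.sum_le_sum fun i _ =>
      aux_amgm (hb i) (hc i) (aux_s_pos hon hSpos hσ i)) d
  rw [misalignment, ← hΩ]
  exact le_antisymm (csInf_le ⟨mstar, hlb⟩ hmem) (le_csInf ⟨mstar, hmem⟩ hlb)
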